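/- Let N ≥ 3 be an odd integer. Define r : ℤ/Nℤ → ℚ by r_0 = N − 1 and r_i = −1 for i ≠ 0. Then the unique function n : ℤ/Nℤ → ℚ satisfying (n_{i+1} − n_i) + (n_{i−1} − n_i) + r_i = 0 for all i ∈ ℤ/Nℤ and Σ_{i∈ℤ/Nℤ} n_i = 0 is given by n_i = (N²−1)/12 − i(N−i)/2 for 0 ≤ i < N. Moreover, the minimum value of n is −(N²−1)/24, attained exactly at i = (N−1)/2 and i = (N+1)/2. -/

import Mathlib

open Finset

lemma zmod_sum (N : ℕ) [NeZero N] (g : ℕ → ℚ) : ∑ i : ZMod N, g i.val = ∑ k ∈ range N, g k := by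
  refine Finset.sum_nbij' (fun i => i.val) (fun k => (k : ZMod N)) ?_ ?_ ?_ ?_ ?_
  · intro i _; exact mem_range.2 (ZMod.val_lt i)
  · intro k _; exact mem_univ _
  · intro i _; simp [ZMod.natCast_val, ZMod.cast_id]
  · intro k hk; exact ZMod.val_cast_of_lt (mem_range.1 hk)
  · intro i _; rfl
lemma sum_id' (n : ℕ) : ∑ k ∈ range n, (k:ℚ) = n*(n-1)/2 := by
  induction n with
  | zero => simp
  | succ m ih => rw [sum_range_succ, ih]; push_cast; ring

lemma sum_sq' (n : ℕ) : ∑ k ∈ range n, (k:ℚ)^2 = n*(n-1)*(2*n-1)/6 := by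
  induction n with
  | zero => simp
  | succ m ih => rw [sum_range_succ, ih]; push_cast; ring

noncomputable def fq (N k : ℕ) : ℚ := ((N:ℚ)^2 - 1)/12 - (k:ℚ)*((N:ℚ)-(k:ℚ))/2

lemma fq_sum (N : ℕ) : ∑ k ∈ range N, fq N k = 0 := by
  unfold fq
  have h1 := sum_id' N
  have h2 := sum_sq' N
  rw [sum_sub_distrib, sum_const, card_range]
  have key : ∑ k ∈ range N, (k:ℚ)*((N:ℚ)-(k:ℚ))
      = (N:ℚ) * (∑ k ∈ range N, (k:ℚ)) - ∑ k ∈ range N, (k:ℚ)^2 := by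
    rw [mul_sum, ← sum_sub_distrib]
    exact sum_congr rfl fun k _ => by ring
  have : ∑ k ∈ range N, (k:ℚ)*((N:ℚ)-(k:ℚ))/2
      = ((N:ℚ) * (∑ k ∈ range N, (k:ℚ)) - ∑ k ∈ range N, (k:ℚ)^2)/2 := by
    rw [← sum_div, key]
  rw [this, h1, h2]; ring

lemma cast_pred (N : ℕ) [NeZero N] (hN : 3 ≤ N) : ((N-1:ℕ):ZMod N) = -1 := by
  have e1 : ((N-1:ℕ):ZMod N) + 1 = 0 := by
    have h : (((N-1)+1 : ℕ) : ZMod N) = 0 := by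
      rw [show (N-1)+1 = N by omega]; exact ZMod.natCast_self N
    rwa [Nat.cast_add, Nat.cast_one] at h
  exact eq_neg_of_add_eq_zero_left e1

lemma m_spec (N : ℕ) [NeZero N] (hN : 3 ≤ N)
    (r : ZMod N → ℚ) (hr0 : r 0 = (N:ℚ)-1) (hr : ∀ i : ZMod N, i ≠ 0 → r i = -1)
    (i : ZMod N) :
    (fq N (i+1).val - fq N i.val) + (fq N (i-1).val - fq N i.val) + r i = 0 := by
  have hkN : i.val < N := ZMod.val_lt i
  have hi : ((i.val : ℕ) : ZMod N) = i := by simp [ZMod.natCast_val, ZMod.cast_id]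
  rcases Nat.eq_zero_or_pos i.val with h0 | hpos
  · -- i = 0
    have hi0 : i = 0 := by rw [← hi, h0]; simp
    have hv1 : (i+1).val = 1 := by
      rw [hi0, zero_add, show (1:ZMod N) = ((1:ℕ):ZMod N) by norm_cast,
        ZMod.val_cast_of_lt (by omega)]
    have hvm : (i-1).val = N - 1 := by
      rw [hi0, zero_sub, ← cast_pred N hN, ZMod.val_cast_of_lt (by omega)]
    rw [hv1, hvm, h0, hi0, hr0]
    unfold fq
    rw [show ((N-1:ℕ):ℚ) = (N:ℚ) - 1 by
      rw [Nat.cast_sub (by omega : 1 ≤ N)]; norm_num]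
    push_cast; ring
  · have hne : i ≠ 0 := by
      intro h; rw [h] at hpos; simp [ZMod.val_zero] at hpos
    rw [hr i hne]
    obtain ⟨j, hj⟩ : ∃ j, i.val = j + 1 := ⟨i.val - 1, by omega⟩
    have hvm : (i-1).val = j := by
      have e : ((j:ℕ):ZMod N) = i - 1 := by
        rw [eq_sub_iff_add_eq, ← hi, hj]; push_cast; ring
      rw [← e, ZMod.val_cast_of_lt (by omega)]
    rcases Nat.lt_or_ge (i.val + 1) N with hlt | hge
    · -- middle case
      have hv1 : (i+1).val = i.val + 1 := by
        have e : ((i.val + 1 : ℕ):ZMod N) = i + 1 := by push_cast [hi]; ring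
        rw [← e, ZMod.val_cast_of_lt hlt]
      rw [hv1, hvm, hj]; unfold fq; push_cast; ring
    · -- i.val = N - 1
      have hval : i.val = N - 1 := by omega
      have hv1 : (i+1).val = 0 := by
        rw [← hi, hval, cast_pred N hN]; simp
      have hNj : (N:ℚ) = (j:ℚ) + 2 := by
        have : N = j + 2 := by omega
        rw [this]; push_cast; ring
      rw [hv1, hvm, hj]; unfold fq; rw [hNj]; push_cast; ring

lemma unique_sol (N : ℕ) [NeZero N] (r : ZMod N → ℚ) (n n' : ZMod N → ℚ)
    (h : ∀ i : ZMod N, (n (i + 1) - n i) + (n (i - 1) - n i) + r i = 0)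
    (h' : ∀ i : ZMod N, (n' (i + 1) - n' i) + (n' (i - 1) - n' i) + r i = 0)
    (hs : ∑ i : ZMod N, n i = 0) (hs' : ∑ i : ZMod N, n' i = 0) : n = n' := by
  set d : ZMod N → ℚ := fun i => n i - n' i with hd
  have hrec : ∀ i : ZMod N, d (i+1) - d i = d i - d (i-1) := by
    intro i
    have := h i; have := h' i
    simp only [hd]; linarith
  set g : ZMod N → ℚ := fun i => d (i+1) - d i with hg
  have hgstep : ∀ i : ZMod N, g i = g (i - 1) := by
    intro i; simp only [hg]
    have := hrec i
    rw [show i - 1 + 1 = i by ring]; linarith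
  have hgconst : ∀ k : ℕ, g (k : ZMod N) = g 0 := by
    intro k; induction k with
    | zero => simp
    | succ m ih =>
      have := hgstep ((m+1 : ℕ) : ZMod N)
      rw [show ((m+1 : ℕ) : ZMod N) - 1 = (m : ZMod N) by push_cast; ring] at this
      rw [this]; exact ih
  have hgall : ∀ i : ZMod N, g i = g 0 := by
    intro i
    have hi : ((i.val : ℕ) : ZMod N) = i := by simp [ZMod.natCast_val, ZMod.cast_id]
    rw [← hi]; exact hgconst i.val
  have hsumg : ∑ i : ZMod N, g i = 0 := by
    simp only [hg]
    rw [Finset.sum_sub_distrib]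
    have : ∑ i : ZMod N, d (i + 1) = ∑ i : ZMod N, d i :=
      Fintype.sum_equiv (Equiv.addRight 1) _ _ (fun i => rfl)
    rw [this]; ring
  have hNQ : (N : ℚ) ≠ 0 := Nat.cast_ne_zero.2 (NeZero.ne N)
  have hg0 : g 0 = 0 := by
    have : ∑ i : ZMod N, g i = (N : ℚ) * g 0 := by
      rw [Finset.sum_congr rfl (fun i _ => hgall i), Finset.sum_const, Finset.card_univ,
        ZMod.card, nsmul_eq_mul]
    rw [hsumg] at this
    field_simp at this; exact (mul_eq_zero.1 this.symm).resolve_left hNQ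
  have hdstep : ∀ i : ZMod N, d (i + 1) = d i := by
    intro i
    have := hgall i; rw [hg0] at this
    simp only [hg] at this; linarith
  have hdconst : ∀ k : ℕ, d (k : ZMod N) = d 0 := by
    intro k; induction k with
    | zero => simp
    | succ m ih =>
      have := hdstep ((m : ℕ) : ZMod N)
      rw [show ((m : ZMod N)) + 1 = ((m+1 : ℕ) : ZMod N) by push_cast; ring] at this
      rw [this]; exact ih
  have hdall : ∀ i : ZMod N, d i = d 0 := by
    intro i
    have hi : ((i.val : ℕ) : ZMod N) = i := by simp [ZMod.natCast_val, ZMod.cast_id]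
    rw [← hi]; exact hdconst i.val
  have hd0 : d 0 = 0 := by
    have : ∑ i : ZMod N, d i = (N : ℚ) * d 0 := by
      rw [Finset.sum_congr rfl (fun i _ => hdall i), Finset.sum_const, Finset.card_univ,
        ZMod.card, nsmul_eq_mul]
    have hsd : ∑ i : ZMod N, d i = 0 := by
      simp only [hd]; rw [Finset.sum_sub_distrib, hs, hs']; ring
    rw [hsd] at this
    field_simp at this; exact (mul_eq_zero.1 this.symm).resolve_left hNQ
  funext i
  have := hdall i; rw [hd0] at this
  simp only [hd] at this; linarith

lemma fq_key (N : ℕ) (hodd : Odd N) (k : ℕ) :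
    1 ≤ ((N:ℤ) - 2*k)^2 := by
  obtain ⟨t, ht⟩ := hodd
  set z : ℤ := (N:ℤ) - 2*k with hz
  have hzodd : z = 2*((t:ℤ) - k) + 1 := by rw [hz, ht]; push_cast; ring
  have hne : z ≠ 0 := by omega
  rcases lt_or_gt_of_ne hne with h | h
  · nlinarith
  · nlinarith

lemma fq_min (N : ℕ) (hodd : Odd N) (k : ℕ) :
    -(((N:ℚ)^2-1)/24) ≤ fq N k := by
  have h := fq_key N hodd k
  have hq : 1 ≤ ((N:ℚ) - 2*k)^2 := by exact_mod_cast h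
  unfold fq; nlinarith

lemma fq_eq_iff (N : ℕ) (hN : 3 ≤ N) (hodd : Odd N) (k : ℕ) :
    fq N k = -(((N:ℚ)^2-1)/24) ↔ (k = (N-1)/2 ∨ k = (N+1)/2) := by
  obtain ⟨t, ht⟩ := hodd
  have h1 : (N-1)/2 = t := by omega
  have h2 : (N+1)/2 = t+1 := by omega
  rw [h1, h2]
  constructor
  · intro heq
    have hq : ((N:ℚ) - 2*k)^2 = 1 := by unfold fq at heq; nlinarith
    have hz : ((N:ℤ) - 2*k)^2 = 1 := by exact_mod_cast hq
    have : ((N:ℤ) - 2*k - 1) * ((N:ℤ) - 2*k + 1) = 0 := by ring_nf; linarith [hz]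
    rcases mul_eq_zero.1 this with h | h
    · left; omega
    · right; omega
  · intro hk
    have hNt : (N:ℚ) = 2*(t:ℚ)+1 := by rw [ht]; push_cast; ring
    rcases hk with h | h
    · rw [h]; unfold fq; rw [hNt]; push_cast; ring
    · rw [h]; unfold fq; rw [hNt]; push_cast; ring


/-- Let `N ≥ 3` be odd, `r : ℤ/Nℤ → ℚ` with `r 0 = N − 1` and `r i = −1` for
`i ≠ 0`.  Then there is exactly one `n : ℤ/Nℤ → ℚ` with
`(n_{i+1} − n_i) + (n_{i−1} − n_i) + r_i = 0` for all `i` and `Σ_i n_i = 0`; it is given by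
`n_i = (N²−1)/12 − i(N−i)/2` for `0 ≤ i < N`, its minimum value is `−(N²−1)/24`, attained
exactly at `i = (N−1)/2` and `i = (N+1)/2`. -/
theorem ngon_valuation_system
    (N : ℕ) [NeZero N] (hN : 3 ≤ N) (hodd : Odd N)
    (r : ZMod N → ℚ) (hr0 : r 0 = (N : ℚ) - 1) (hr : ∀ i : ZMod N, i ≠ 0 → r i = -1) :
    (∃! n : ZMod N → ℚ,
        (∀ i : ZMod N, (n (i + 1) - n i) + (n (i - 1) - n i) + r i = 0) ∧
        ∑ i : ZMod N, n i = 0) ∧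
    ∀ n : ZMod N → ℚ,
      (∀ i : ZMod N, (n (i + 1) - n i) + (n (i - 1) - n i) + r i = 0) →
      ∑ i : ZMod N, n i = 0 →
      ((∀ i : ℕ, i < N →
          n (i : ZMod N) = ((N : ℚ) ^ 2 - 1) / 12 - (i : ℚ) * ((N : ℚ) - (i : ℚ)) / 2) ∧
       (∀ i : ZMod N, -(((N : ℚ) ^ 2 - 1) / 24) ≤ n i) ∧
       (∀ i : ZMod N, n i = -(((N : ℚ) ^ 2 - 1) / 24) ↔
          (i = (((N - 1) / 2 : ℕ) : ZMod N) ∨ i = (((N + 1) / 2 : ℕ) : ZMod N)))) := by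
  set m : ZMod N → ℚ := fun i => fq N i.val with hm
  have hmrec : ∀ i : ZMod N, (m (i + 1) - m i) + (m (i - 1) - m i) + r i = 0 :=
    fun i => m_spec N hN r hr0 hr i
  have hmsum : ∑ i : ZMod N, m i = 0 := by
    simp only [hm]; rw [zmod_sum N (fq N)]; exact fq_sum N
  refine ⟨⟨m, ⟨hmrec, hmsum⟩, fun n hn => unique_sol N r n m hn.1 hmrec hn.2 hmsum⟩, ?_⟩
  intro n hn1 hn2
  have hnm : n = m := unique_sol N r n m hn1 hmrec hn2 hmsum
  subst hnm
  refine ⟨?_, ?_, ?_⟩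
  · intro i hi
    simp only [hm, ZMod.val_cast_of_lt hi]
    rfl
  · intro i
    exact fq_min N hodd i.val
  · intro i
    have hcast : ∀ c : ℕ, c < N → (i = (c : ZMod N) ↔ i.val = c) := by
      intro c hc
      constructor
      · intro h; rw [h]; exact ZMod.val_cast_of_lt hc
      · intro h; rw [← h]; simp [ZMod.natCast_val, ZMod.cast_id]
    rw [hcast _ (by omega : (N-1)/2 < N), hcast _ (by omega : (N+1)/2 < N)]
    exact fq_eq_iff N hN hodd i.val
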